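/- arXiv:1501.07365 — 4 statements merged into one kernel-verified Lean document; each statement's English description precedes it below -/
import Mathlib

section
/- For real constants a, b, c with a ≠ 0, the cubic dual-quaternion polynomial C = t³ - (k - ε(aj - bk))t² + (1 - ε(b + ai - ck))t - k + cε has norm polynomial C·C̄ = (t²+1)³, which is real; hence C is a motion polynomial. -/
open Polynomial DualNumber TrivSqZeroExt

set_option maxHeartbeats 2000000

noncomputable section

/-- Dual quaternions: dual numbers over the real quaternions. -/
abbrev DQ : Type := DualNumber (Quaternion ℝ)

/-- The quaternion unit i inside the dual quaternions. -/
def Di : DQ := inl ⟨0,1,0,0⟩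
/-- The quaternion unit j inside the dual quaternions. -/
def Dj : DQ := inl ⟨0,0,1,0⟩
/-- The quaternion unit k inside the dual quaternions. -/
def Dk : DQ := inl ⟨0,0,0,1⟩
/-- Embedding of real scalars into the dual quaternions. -/
def rr (x : ℝ) : DQ := algebraMap ℝ DQ x
/-- Dual quaternion conjugation: quaternion conjugation on primal and dual parts. -/
def qconj (h : DQ) : DQ := inl (star (fst h)) + inr (star (snd h))
/-- The Darboux motion polynomial
C = t³ - (k - ε(aj - bk))t² + (1 - ε(b + ai - ck))t - k + cε. -/
def darboux (a b c : ℝ) : Polynomial DQ :=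
  X ^ 3 - Polynomial.C (Dk - eps * (rr a * Dj - rr b * Dk)) * X ^ 2
    + Polynomial.C (1 - eps * (rr b + rr a * Di - rr c * Dk)) * X
    - Polynomial.C Dk + Polynomial.C (rr c * eps)

/-- Coefficientwise conjugate of a dual quaternion polynomial. -/
def pconj (P : Polynomial DQ) : Polynomial DQ :=
  P.sum fun n a => Polynomial.C (qconj a) * X ^ n

lemma qconj_zero : qconj 0 = 0 := by simp [qconj]

lemma qconj_one : qconj 1 = 1 := by ext <;> simp [qconj]

lemma qconj_add (x y : DQ) : qconj (x+y) = qconj x + qconj y := by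
  simp only [qconj, fst_add, snd_add, star_add, inl_add, inr_add]; abel

lemma pconj_add (P Q : Polynomial DQ) : pconj (P+Q) = pconj P + pconj Q := by
  unfold pconj
  apply Polynomial.sum_add_index <;> intros <;>
    simp only [qconj_zero, qconj_add, Polynomial.C_0, zero_mul, Polynomial.C_add, add_mul]

lemma pconj_monomial (n : ℕ) (x : DQ) : pconj (monomial n x) = monomial n (qconj x) := by
  unfold pconj
  rw [Polynomial.sum_monomial_index] <;>
    simp [qconj_zero, Polynomial.C_mul_X_pow_eq_monomial]

lemma darboux_eq (a b c : ℝ) : darboux a b c =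
    monomial 3 (1:DQ) + monomial 2 (-(Dk - eps * (rr a * Dj - rr b * Dk)))
      + monomial 1 (1 - eps * (rr b + rr a * Di - rr c * Dk))
      + monomial 0 (-Dk + rr c * eps) := by
  simp only [darboux, ← Polynomial.C_mul_X_pow_eq_monomial, ← Polynomial.X_pow_eq_monomial,
    pow_zero, pow_one, mul_one, Polynomial.C_add, Polynomial.C_neg, Polynomial.C_1, one_mul]
  rw [← sub_eq_zero]
  noncomm_ring
  rw [smul_mul_assoc, smul_smul, show ((-1:ℤ)*(-1)) = 1 from rfl, one_smul, neg_one_smul,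
    neg_add_cancel]

lemma key (p q r p' q' r' : DQ) (h5 : p + p' = 0) (h4 : q + p * p' + q' = 3)
    (h3 : r + p * q' + q * p' + r' = 0) (h2 : p * r' + q * q' + r * p' = 3)
    (h1 : q * r' + r * q' = 0) (h0 : r * r' = 1) :
    (monomial 3 (1:DQ) + monomial 2 p + monomial 1 q + monomial 0 r) *
      (monomial 3 (1:DQ) + monomial 2 p' + monomial 1 q' + monomial 0 r') = (X^2+1)^3 := by
  have rhs : ((X:DQ[X])^2+1)^3 = monomial 6 1 + monomial 4 3 + monomial 2 3 + monomial 0 1 := by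
    simp only [← Polynomial.C_mul_X_pow_eq_monomial, map_ofNat, Polynomial.C_1, one_mul,
      ← Polynomial.X_pow_eq_monomial, pow_zero, mul_one]
    noncomm_ring
  rw [rhs]
  simp only [add_mul, mul_add, Polynomial.monomial_mul_monomial]
  refine Polynomial.ext fun n => ?_
  rcases n with _|_|_|_|_|_|_|n <;>
    simp only [Polynomial.coeff_add, Polynomial.coeff_monomial] <;> norm_num
  · exact h0
  · rw [add_comm]; exact h1
  · have h := h2; abel_nf at h ⊢; exact h
  · have h := h3; abel_nf at h ⊢; exact h
  · have h := h4; abel_nf at h ⊢; exact h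
  · simpa using h5

lemma inlq_fst (x y z w : ℝ) : (inl (⟨x,y,z,w⟩ : Quaternion ℝ) : DQ).fst = (⟨x,y,z,w⟩ : Quaternion ℝ) := rfl

lemma inlq_snd (x y z w : ℝ) : (inl (⟨x,y,z,w⟩ : Quaternion ℝ) : DQ).snd = 0 := rfl

lemma Di_fst_re : (fst Di).re = 0 := rfl

lemma Di_fst_imI : (fst Di).imI = 1 := rfl

lemma Di_fst_imJ : (fst Di).imJ = 0 := rfl

lemma Di_fst_imK : (fst Di).imK = 0 := rfl

lemma Di_snd : snd Di = 0 := rfl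

lemma Dj_fst_re : (fst Dj).re = 0 := rfl

lemma Dj_fst_imI : (fst Dj).imI = 0 := rfl

lemma Dj_fst_imJ : (fst Dj).imJ = 1 := rfl

lemma Dj_fst_imK : (fst Dj).imK = 0 := rfl

lemma Dj_snd : snd Dj = 0 := rfl

lemma Dk_fst_re : (fst Dk).re = 0 := rfl

lemma Dk_fst_imI : (fst Dk).imI = 0 := rfl

lemma Dk_fst_imJ : (fst Dk).imJ = 0 := rfl

lemma Dk_fst_imK : (fst Dk).imK = 1 := rfl

lemma Dk_snd : snd Dk = 0 := rfl

lemma inl3_fst_re : (fst (inl (3 : Quaternion ℝ) : DQ)).re = 3 := rfl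

lemma inl3_fst_imI : (fst (inl (3 : Quaternion ℝ) : DQ)).imI = 0 := rfl

lemma inl3_fst_imJ : (fst (inl (3 : Quaternion ℝ) : DQ)).imJ = 0 := rfl

lemma inl3_fst_imK : (fst (inl (3 : Quaternion ℝ) : DQ)).imK = 0 := rfl

lemma inl3_snd : (snd (inl (3 : Quaternion ℝ) : DQ)) = 0 := rfl

lemma q3_re : (3 : Quaternion ℝ).re = 3 := rfl

lemma q3_imI : (3 : Quaternion ℝ).imI = 0 := rfl

lemma q3_imJ : (3 : Quaternion ℝ).imJ = 0 := rfl

lemma q3_imK : (3 : Quaternion ℝ).imK = 0 := rfl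

lemma id5 (a b c : ℝ) :
    -(Dk - eps * (rr a * Dj - rr b * Dk)) + qconj (-(Dk - eps * (rr a * Dj - rr b * Dk))) = 0 := by
  ext <;>
  simp [Di_fst_re, Di_fst_imI, Di_fst_imJ, Di_fst_imK, Di_snd, Dj_fst_re, Dj_fst_imI, Dj_fst_imJ,
    Dj_fst_imK, Dj_snd, Dk_fst_re, Dk_fst_imI, Dk_fst_imJ, Dk_fst_imK, Dk_snd, rr, qconj, TrivSqZeroExt.fst_mul, DualNumber.snd_mul, Quaternion.ext_iff,
    TrivSqZeroExt.algebraMap_eq_inl', MulOpposite.smul_eq_mul_unop,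
    inlq_fst, inlq_snd, inl3_fst_re, inl3_fst_imI, inl3_fst_imJ, inl3_fst_imK, inl3_snd, q3_re, q3_imI, q3_imJ, q3_imK, Quaternion.re_zero, Quaternion.imI_zero, Quaternion.imJ_zero, Quaternion.imK_zero,
    Quaternion.re_one, Quaternion.imI_one, Quaternion.imJ_one, Quaternion.imK_one] <;> ring

lemma id4 (a b c : ℝ) :
    (1 - eps * (rr b + rr a * Di - rr c * Dk))
      + (-(Dk - eps * (rr a * Dj - rr b * Dk))) * qconj (-(Dk - eps * (rr a * Dj - rr b * Dk)))
      + qconj (1 - eps * (rr b + rr a * Di - rr c * Dk)) = 3 := by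
  rw [show (3:DQ) = inl (3 : Quaternion ℝ) from rfl]
  ext <;>
  simp [Di_fst_re, Di_fst_imI, Di_fst_imJ, Di_fst_imK, Di_snd, Dj_fst_re, Dj_fst_imI, Dj_fst_imJ,
    Dj_fst_imK, Dj_snd, Dk_fst_re, Dk_fst_imI, Dk_fst_imJ, Dk_fst_imK, Dk_snd, rr, qconj, TrivSqZeroExt.fst_mul, DualNumber.snd_mul, Quaternion.ext_iff,
    TrivSqZeroExt.algebraMap_eq_inl', MulOpposite.smul_eq_mul_unop,
    inlq_fst, inlq_snd, inl3_fst_re, inl3_fst_imI, inl3_fst_imJ, inl3_fst_imK, inl3_snd, q3_re, q3_imI, q3_imJ, q3_imK, Quaternion.re_zero, Quaternion.imI_zero, Quaternion.imJ_zero, Quaternion.imK_zero,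
    Quaternion.re_one, Quaternion.imI_one, Quaternion.imJ_one, Quaternion.imK_one] <;> ring

lemma id3 (a b c : ℝ) :
    (-Dk + rr c * eps)
      + (-(Dk - eps * (rr a * Dj - rr b * Dk))) * qconj (1 - eps * (rr b + rr a * Di - rr c * Dk))
      + (1 - eps * (rr b + rr a * Di - rr c * Dk)) * qconj (-(Dk - eps * (rr a * Dj - rr b * Dk)))
      + qconj (-Dk + rr c * eps) = 0 := by
  ext <;>
  simp [Di_fst_re, Di_fst_imI, Di_fst_imJ, Di_fst_imK, Di_snd, Dj_fst_re, Dj_fst_imI, Dj_fst_imJ,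
    Dj_fst_imK, Dj_snd, Dk_fst_re, Dk_fst_imI, Dk_fst_imJ, Dk_fst_imK, Dk_snd, rr, qconj, TrivSqZeroExt.fst_mul, DualNumber.snd_mul, Quaternion.ext_iff,
    TrivSqZeroExt.algebraMap_eq_inl', MulOpposite.smul_eq_mul_unop,
    inlq_fst, inlq_snd, inl3_fst_re, inl3_fst_imI, inl3_fst_imJ, inl3_fst_imK, inl3_snd, q3_re, q3_imI, q3_imJ, q3_imK, Quaternion.re_zero, Quaternion.imI_zero, Quaternion.imJ_zero, Quaternion.imK_zero,
    Quaternion.re_one, Quaternion.imI_one, Quaternion.imJ_one, Quaternion.imK_one] <;> ring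

lemma id2 (a b c : ℝ) :
    (-(Dk - eps * (rr a * Dj - rr b * Dk))) * qconj (-Dk + rr c * eps)
      + (1 - eps * (rr b + rr a * Di - rr c * Dk)) * qconj (1 - eps * (rr b + rr a * Di - rr c * Dk))
      + (-Dk + rr c * eps) * qconj (-(Dk - eps * (rr a * Dj - rr b * Dk))) = 3 := by
  rw [show (3:DQ) = inl (3 : Quaternion ℝ) from rfl]
  ext <;>
  simp [Di_fst_re, Di_fst_imI, Di_fst_imJ, Di_fst_imK, Di_snd, Dj_fst_re, Dj_fst_imI, Dj_fst_imJ,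
    Dj_fst_imK, Dj_snd, Dk_fst_re, Dk_fst_imI, Dk_fst_imJ, Dk_fst_imK, Dk_snd, rr, qconj, TrivSqZeroExt.fst_mul, DualNumber.snd_mul, Quaternion.ext_iff,
    TrivSqZeroExt.algebraMap_eq_inl', MulOpposite.smul_eq_mul_unop,
    inlq_fst, inlq_snd, inl3_fst_re, inl3_fst_imI, inl3_fst_imJ, inl3_fst_imK, inl3_snd, q3_re, q3_imI, q3_imJ, q3_imK, Quaternion.re_zero, Quaternion.imI_zero, Quaternion.imJ_zero, Quaternion.imK_zero,
    Quaternion.re_one, Quaternion.imI_one, Quaternion.imJ_one, Quaternion.imK_one] <;> ring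

lemma id1 (a b c : ℝ) :
    (1 - eps * (rr b + rr a * Di - rr c * Dk)) * qconj (-Dk + rr c * eps)
      + (-Dk + rr c * eps) * qconj (1 - eps * (rr b + rr a * Di - rr c * Dk)) = 0 := by
  ext <;>
  simp [Di_fst_re, Di_fst_imI, Di_fst_imJ, Di_fst_imK, Di_snd, Dj_fst_re, Dj_fst_imI, Dj_fst_imJ,
    Dj_fst_imK, Dj_snd, Dk_fst_re, Dk_fst_imI, Dk_fst_imJ, Dk_fst_imK, Dk_snd, rr, qconj, TrivSqZeroExt.fst_mul, DualNumber.snd_mul, Quaternion.ext_iff,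
    TrivSqZeroExt.algebraMap_eq_inl', MulOpposite.smul_eq_mul_unop,
    inlq_fst, inlq_snd, inl3_fst_re, inl3_fst_imI, inl3_fst_imJ, inl3_fst_imK, inl3_snd, q3_re, q3_imI, q3_imJ, q3_imK, Quaternion.re_zero, Quaternion.imI_zero, Quaternion.imJ_zero, Quaternion.imK_zero,
    Quaternion.re_one, Quaternion.imI_one, Quaternion.imJ_one, Quaternion.imK_one] <;> ring

lemma id0 (a b c : ℝ) : (-Dk + rr c * eps) * qconj (-Dk + rr c * eps) = 1 := by
  ext <;>
  simp [Di_fst_re, Di_fst_imI, Di_fst_imJ, Di_fst_imK, Di_snd, Dj_fst_re, Dj_fst_imI, Dj_fst_imJ,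
    Dj_fst_imK, Dj_snd, Dk_fst_re, Dk_fst_imI, Dk_fst_imJ, Dk_fst_imK, Dk_snd, rr, qconj, TrivSqZeroExt.fst_mul, DualNumber.snd_mul, Quaternion.ext_iff,
    TrivSqZeroExt.algebraMap_eq_inl', MulOpposite.smul_eq_mul_unop,
    inlq_fst, inlq_snd, inl3_fst_re, inl3_fst_imI, inl3_fst_imJ, inl3_fst_imK, inl3_snd, q3_re, q3_imI, q3_imJ, q3_imK, Quaternion.re_zero, Quaternion.imI_zero, Quaternion.imJ_zero, Quaternion.imK_zero,
    Quaternion.re_one, Quaternion.imI_one, Quaternion.imJ_one, Quaternion.imK_one] <;> ring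

lemma darboux_monic (a b c : ℝ) : (darboux a b c).Monic := by
  unfold darboux; monicity!

/-- The Darboux motion polynomial has norm polynomial (t²+1)³, which is real;
together with the invertible leading coefficient it is a motion polynomial. -/
theorem stmt8 (a b c : ℝ) (ha : a ≠ 0) :
    darboux a b c * pconj (darboux a b c) = (X ^ 2 + 1) ^ 3 ∧
    IsUnit (darboux a b c).leadingCoeff := by
  constructor
  · rw [darboux_eq a b c, pconj_add, pconj_add, pconj_add, pconj_monomial, pconj_monomial,
      pconj_monomial, pconj_monomial, qconj_one]
    exact key _ _ _ _ _ _ (id5 a b c) (id4 a b c) (id3 a b c) (id2 a b c) (id1 a b c) (id0 a b c)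
  · rw [(darboux_monic a b c).leadingCoeff]
    exact isUnit_one
end
end

section
/- If a dual quaternion q₃ satisfies C(q₃) = 0 (right evaluation) for the Darboux motion polynomial C = t³ - (k - ε(aj - bk))t² + (1 - ε(b + ai - ck))t - k + cε with a ≠ 0, and q₃ is of the form k + ε(vi + wj) with v, w ∈ ℝ, then the quotient Q defined by C = Q·(t - q₃) has primal part t² + 1. -/
open Polynomial DualNumber TrivSqZeroExt

noncomputable section

/-- If q₃ = k + ε(vi + wj) is a right zero of the Darboux motion polynomial, the
quotient Q with C = Q·(t - q₃) has primal part t² + 1. -/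
theorem stmt10 (a b c v w : ℝ) (ha : a ≠ 0) (Q : Polynomial DQ)
    (hzero : (darboux a b c).eval₂ (RingHom.id DQ) (Dk + eps * (rr v * Di + rr w * Dj)) = 0)
    (hquot : darboux a b c =
      Q * (X - Polynomial.C (Dk + eps * (rr v * Di + rr w * Dj)))) :
    Q.map (TrivSqZeroExt.fstHom ℝ (Quaternion ℝ) (Quaternion ℝ)).toRingHom = X ^ 2 + 1 := by
  set φ := (TrivSqZeroExt.fstHom ℝ (Quaternion ℝ) (Quaternion ℝ)).toRingHom with hφ
  set k' : Quaternion ℝ := ⟨0,0,0,1⟩ with hk'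
  have hk : φ (Dk + eps * (rr v * Di + rr w * Dj)) = k' := by
    simp [hφ, Dk, fstHom_apply, fst_mul, fst_eps]; rfl
  have h1 : φ (Dk - eps * (rr a * Dj - rr b * Dk)) = k' := by
    simp [hφ, Dk, fstHom_apply, fst_mul, fst_eps]; rfl
  have h2 : φ (1 - eps * (rr b + rr a * Di - rr c * Dk)) = 1 := by
    simp [hφ, fstHom_apply, fst_mul, fst_eps]
  have h3 : φ Dk = k' := by simp [hφ, Dk, fstHom_apply]; rfl
  have h4 : φ (rr c * eps) = 0 := by
    simp [hφ, fstHom_apply, fst_mul, fst_eps]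
  have h := congrArg (Polynomial.map φ) hquot
  have hd : (darboux a b c).map φ
      = (X ^ 2 + 1) * (X - Polynomial.C k') := by
    simp only [darboux, Polynomial.map_add, Polynomial.map_sub, Polynomial.map_mul,
      Polynomial.map_pow, Polynomial.map_X, Polynomial.map_C, h1, h2, h3, h4,
      map_zero, map_one, Polynomial.C_0, Polynomial.C_1, one_mul, add_zero]
    have hc : X ^ 2 * Polynomial.C k' = Polynomial.C k' * X ^ 2 :=
      ((Polynomial.commute_X (Polynomial.C k')).pow_left 2).eq
    rw [add_mul, one_mul, mul_sub, hc, ← pow_succ]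
    abel
  rw [hd, Polynomial.map_mul, Polynomial.map_sub, Polynomial.map_X, Polynomial.map_C, hk] at h
  have h2' : (X ^ 2 + 1 - Q.map φ) * (X - Polynomial.C k') = 0 := by
    rw [sub_mul, h, sub_self]
  rcases mul_eq_zero.mp h2' with h3 | h3
  · exact (sub_eq_zero.mp h3).symm
  · exact absurd h3 (X_sub_C_ne_zero _)
end
end

section
/- Each of the three linear factors Q₁, Q₂, Q₃ in the factorization FI of the Darboux motion polynomial is a rotation polynomial, i.e., writing Qᵢ = t - hᵢ, the dual quaternion hᵢ = p + εd satisfies: the real part of p is 0, the vector part of p is nonzero, and the real inner product of the vector parts of p and d vanishes. -/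
open Polynomial DualNumber TrivSqZeroExt

noncomputable section

/-- The unit vector quaternion E of the factorization FI, as a dual quaternion. -/
def ED (a b c : ℝ) : DQ :=
  inl ⟨0, 2*a*c/(a^2+b^2+c^2), 2*a*b/(a^2+b^2+c^2), (a^2-b^2-c^2)/(a^2+b^2+c^2)⟩

/-- A dual quaternion h defines a rotation polynomial t - h: zero scalar primal
part, zero scalar dual part (Study condition h₄ = 0), nonzero primal vector part,
and vanishing inner product of primal and dual vector parts. -/
def IsRotDQ (h : DQ) : Prop :=
  (fst h).re = 0 ∧ (snd h).re = 0 ∧ fst h ≠ 0 ∧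
    (fst h).imI * (snd h).imI + (fst h).imJ * (snd h).imJ + (fst h).imK * (snd h).imK = 0


lemma term_eq (x : ℝ) (q : Quaternion ℝ) : rr x * inl q * (eps : DQ) = inr (x • q) := by
  rw [rr, TrivSqZeroExt.algebraMap_eq_inl', ← inl_mul, eps, inl_mul_inr, smul_eq_mul, mul_one,
    Algebra.smul_def]

lemma fst_term (x : ℝ) (q : Quaternion ℝ) : fst (rr x * inl q * (eps : DQ)) = 0 := by
  rw [term_eq, fst_inr]

lemma snd_term (x : ℝ) (q : Quaternion ℝ) : snd (rr x * inl q * (eps : DQ)) = x • q := by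
  rw [term_eq, snd_inr]

def qmk (r i j k : ℝ) : Quaternion ℝ := ⟨r,i,j,k⟩

@[simp] lemma qmk_re (r i j k : ℝ) : (qmk r i j k).re = r := rfl
@[simp] lemma qmk_imI (r i j k : ℝ) : (qmk r i j k).imI = i := rfl
@[simp] lemma qmk_imJ (r i j k : ℝ) : (qmk r i j k).imJ = j := rfl
@[simp] lemma qmk_imK (r i j k : ℝ) : (qmk r i j k).imK = k := rfl

lemma Di_eq : Di = inl (qmk 0 1 0 0) := rfl
lemma Dj_eq : Dj = inl (qmk 0 0 1 0) := rfl
lemma Dk_eq : Dk = inl (qmk 0 0 0 1) := rfl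
lemma ED_eq (a b c : ℝ) : ED a b c =
    inl (qmk 0 (2*a*c/(a^2+b^2+c^2)) (2*a*b/(a^2+b^2+c^2)) ((a^2-b^2-c^2)/(a^2+b^2+c^2))) := rfl

/-- Each of the three linear factors of FI is a rotation polynomial. -/
theorem stmt14 (a b c : ℝ) (ha : a ≠ 0) :
    IsRotDQ (-(ED a b c - rr (b*c/a) * Di * eps
        + rr ((a^2+c^2-b^2)/(2*a)) * Dj * eps - rr b * Dk * eps)) ∧
    IsRotDQ (ED a b c) ∧
    IsRotDQ (Dk - rr (b*c/a) * Di * eps - rr ((a^2+b^2-c^2)/(2*a)) * Dj * eps) := by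
  have hden : a^2+b^2+c^2 ≠ 0 := by positivity
  have hE : (fst (ED a b c) ≠ 0) := by
    simp only [ED_eq, fst_inl, ne_eq, Quaternion.ext_iff, not_and]
    intro _ h1 h2 h3
    have hc : c = 0 := by
      change 2*a*c/(a^2+b^2+c^2) = 0 at h1
      simp [_root_.div_eq_zero_iff, mul_eq_zero, ha, hden] at h1; exact h1
    have hb : b = 0 := by
      change 2*a*b/(a^2+b^2+c^2) = 0 at h2
      simp [_root_.div_eq_zero_iff, mul_eq_zero, ha, hden] at h2; exact h2
    subst hb; subst hc
    change (a^2-0^2-0^2)/(a^2+0^2+0^2) = 0 at h3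
    field_simp at h3
    simp [ha] at h3
  refine ⟨⟨?_, ?_, ?_, ?_⟩, ⟨?_, ?_, ?_, ?_⟩, ⟨?_, ?_, ?_, ?_⟩⟩ <;>
    simp only [fst_neg, fst_sub, fst_add, snd_neg, snd_sub, snd_add,
      fst_term, snd_term, Di_eq, Dj_eq, Dk_eq, qmk_re, qmk_imI, qmk_imJ, qmk_imK,
      ED_eq, fst_inl, snd_inl, Quaternion.re_neg, Quaternion.imI_neg,
      Quaternion.imJ_neg, Quaternion.imK_neg, Quaternion.re_sub, Quaternion.re_add,
      Quaternion.imI_sub, Quaternion.imI_add, Quaternion.imJ_sub, Quaternion.imJ_add,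
      Quaternion.imK_sub, Quaternion.imK_add, Quaternion.re_smul, Quaternion.imI_smul,
      Quaternion.imJ_smul, Quaternion.imK_smul, Quaternion.re_zero, Quaternion.imI_zero,
      Quaternion.imJ_zero, Quaternion.imK_zero, smul_eq_mul, neg_zero, sub_zero, add_zero,
      zero_add, zero_sub, sub_self, mul_zero, zero_mul, mul_one, mul_neg, neg_neg, ne_eq,
      neg_eq_zero, sub_neg_eq_add]

  · simp only [ED_eq, fst_inl] at hE; exact hE
  · field_simp; ring
  · simp only [ED_eq, fst_inl] at hE; exact hE
  · simp [Quaternion.ext_iff, Quaternion.re_zero, Quaternion.imI_zero, Quaternion.imJ_zero,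
      Quaternion.imK_zero]
end
end

section
/- For reals a, b, c, let C₁ = t² + ε(aj - bk)t + 1 + cε·k and Q₄ = t - k. Then C₁·Q₄ = C, where C = t³ - (k - ε(aj - bk))t² + (1 - ε(b + ai - ck))t - k + cε. -/
open Polynomial DualNumber TrivSqZeroExt

noncomputable section

/-- The quadratic motion polynomial C₁ = t² + ε(aj - bk)t + 1 + cεk. -/
def C1 (a b c : ℝ) : Polynomial DQ :=
  X ^ 2 + Polynomial.C (eps * (rr a * Dj - rr b * Dk)) * X
    + Polynomial.C (1 + rr c * eps * Dk)


lemma expandAux (q e f g h : DQ) (h1 : f - e * q = g) (h2 : f * q = q - h) :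
    (X ^ 2 + Polynomial.C e * X + Polynomial.C f) * (X - Polynomial.C q)
      = X ^ 3 - Polynomial.C (q - e) * X ^ 2 + Polynomial.C g * X - Polynomial.C q
        + Polynomial.C h := by
  have k2 : Polynomial.C e * X * Polynomial.C q = Polynomial.C (e * q) * X := by
    rw [mul_assoc, X_mul_C, ← mul_assoc, ← C_mul]
  rw [add_mul, add_mul, mul_sub, mul_sub, mul_sub, X_pow_mul_C, k2, ← C_mul, h2, ← h1,
    C_sub, C_sub, C_sub]
  rw [pow_succ (X : DQ[X]) 2, mul_assoc (Polynomial.C e) X X, ← pow_two, sub_mul, sub_mul]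
  abel

/-- C₁·(t - k) = C for the Darboux motion polynomial C. -/
theorem stmt15 (a b c : ℝ) :
    C1 a b c * (X - Polynomial.C Dk) = darboux a b c := by
  obtain ⟨qi, hqi⟩ : ∃ q : Quaternion ℝ, q = ⟨0,1,0,0⟩ := ⟨_, rfl⟩
  obtain ⟨qj, hqj⟩ : ∃ q : Quaternion ℝ, q = ⟨0,0,1,0⟩ := ⟨_, rfl⟩
  obtain ⟨qk, hqk⟩ : ∃ q : Quaternion ℝ, q = ⟨0,0,0,1⟩ := ⟨_, rfl⟩
  have eI : Di = (TrivSqZeroExt.inl qi : DQ) := by rw [hqi]; rfl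
  have eJ : Dj = (TrivSqZeroExt.inl qj : DQ) := by rw [hqj]; rfl
  have eK : Dk = (TrivSqZeroExt.inl qk : DQ) := by rw [hqk]; rfl
  have kk : Dk * Dk = -1 := by
    rw [eK, ← TrivSqZeroExt.inl_mul, ← TrivSqZeroExt.inl_one, ← TrivSqZeroExt.inl_neg]
    congr 1
    ext <;> simp only [Quaternion.re_mul, Quaternion.imI_mul, Quaternion.imJ_mul,
      Quaternion.imK_mul, Quaternion.re_neg, Quaternion.imI_neg, Quaternion.imJ_neg,
      Quaternion.imK_neg, Quaternion.re_one, Quaternion.imI_one, Quaternion.imJ_one,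
      Quaternion.imK_one] <;> simp [hqk]
  have jk : Dj * Dk = Di := by
    rw [eJ, eK, eI, ← TrivSqZeroExt.inl_mul]
    congr 1
    ext <;> simp only [Quaternion.re_mul, Quaternion.imI_mul, Quaternion.imJ_mul,
      Quaternion.imK_mul] <;> simp [hqi, hqj, hqk]
  have ec : rr c * eps = eps * rr c := Algebra.commutes c eps
  have h1 : (1 + rr c * eps * Dk) - eps * (rr a * Dj - rr b * Dk) * Dk
      = 1 - eps * (rr b + rr a * Di - rr c * Dk) := by
    rw [mul_assoc eps, sub_mul, mul_assoc (rr a), jk, mul_assoc (rr b), kk, ec,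
      mul_assoc eps (rr c)]
    simp only [mul_sub, mul_add, mul_neg, mul_one]
    abel
  have h2 : (1 + rr c * eps * Dk) * Dk = Dk - rr c * eps := by
    rw [add_mul, one_mul, mul_assoc (rr c * eps), kk, mul_neg_one, ← sub_eq_add_neg]
  simp only [C1, darboux]
  exact expandAux _ _ _ _ _ h1 h2
end
end
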